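/- arXiv:2005.00428 — 3 statements merged into one kernel-verified Lean document; each statement's English description precedes it below -/
import Mathlib

section
/- Let G be a group and let F be a countable subgroup of G. Suppose that for every group Γ generated by at most two elements there exists a normal subgroup N of G such that Γ embeds into the image of F under the quotient homomorphism G → G/N. Then G has uncountably many normal subgroups, i.e. the set of normal subgroups of G is uncountable. -/
/-! Auxiliary constructions: for each set `S` of naturals we build a normal
subgroup `NeuK S` of the free group on two generators, such that the map
`S ↦ NeuK S` is injective.  The construction uses permutations of `ℤ`:
the generator `true` maps to the shift and `false` to a transposition. -/

private def NeuX : Equiv.Perm ℤ := Equiv.addLeft 1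

private def NeuY (m : ℕ) : Equiv.Perm ℤ := Equiv.swap 0 ((m : ℤ) + 1)

private def NeuPsi (m : ℕ) : FreeGroup Bool →* Equiv.Perm ℤ :=
  FreeGroup.lift (fun i => if i then NeuX else NeuY m)

private def NeuW (n : ℕ) : FreeGroup Bool :=
  (.of false) * (.of true) ^ (n + 1) * (.of false) * ((.of true) ^ (n + 1))⁻¹ *
    (.of false)⁻¹ * (.of true) ^ (n + 1) * (.of false)⁻¹ * ((.of true) ^ (n + 1))⁻¹

private lemma neu_swap_comm {a b c d : ℤ} (h1 : a ≠ c) (h2 : a ≠ d) (h3 : b ≠ c)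
    (h4 : b ≠ d) :
    Equiv.swap a b * Equiv.swap c d = Equiv.swap c d * Equiv.swap a b := by
  ext t
  simp only [Equiv.Perm.mul_apply, Equiv.swap_apply_def]
  split_ifs <;> simp_all

private lemma neuPsi_w (m n : ℕ) :
    NeuPsi m (NeuW n) =
      Equiv.swap 0 ((m : ℤ) + 1) * Equiv.swap ((n : ℤ) + 1) ((n : ℤ) + (m : ℤ) + 2) *
        (Equiv.swap 0 ((m : ℤ) + 1))⁻¹ *
        (Equiv.swap ((n : ℤ) + 1) ((n : ℤ) + (m : ℤ) + 2))⁻¹ := by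
  have ht : NeuPsi m (.of true) = NeuX := by simp [NeuPsi, FreeGroup.lift_apply_of]
  have hf : NeuPsi m (.of false) = NeuY m := by simp [NeuPsi, FreeGroup.lift_apply_of]
  have hx : NeuX ^ (n + 1) = Equiv.addLeft ((n : ℤ) + 1) := by
    rw [NeuX, Equiv.nsmul_addLeft]
    congr 1
    push_cast [nsmul_eq_mul]
    ring
  have hz : NeuX ^ (n + 1) * NeuY m * (NeuX ^ (n + 1))⁻¹ =
      Equiv.swap ((n : ℤ) + 1) ((n : ℤ) + (m : ℤ) + 2) := by
    rw [hx, NeuY, ← Equiv.swap_apply_apply]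
    congr 1 <;> simp <;> ring
  rw [NeuW]
  simp only [map_mul, map_inv, map_pow, ht, hf]
  rw [show Equiv.swap (0 : ℤ) ((m : ℤ) + 1) = NeuY m from rfl, ← hz]
  simp [mul_assoc, mul_inv_rev]

private lemma neu_triv {m n : ℕ} (hmn : m ≠ n) : NeuPsi m (NeuW n) = 1 := by
  rw [neuPsi_w]
  have hcomm : Equiv.swap (0 : ℤ) ((m : ℤ) + 1) *
        Equiv.swap ((n : ℤ) + 1) ((n : ℤ) + (m : ℤ) + 2) =
      Equiv.swap ((n : ℤ) + 1) ((n : ℤ) + (m : ℤ) + 2) *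
        Equiv.swap (0 : ℤ) ((m : ℤ) + 1) := by
    have hmn' : (m : ℤ) ≠ (n : ℤ) := by exact_mod_cast hmn
    exact neu_swap_comm (by omega) (by omega) (by omega) (by omega)
  rw [hcomm]
  group

private lemma neu_nontriv (n : ℕ) : NeuPsi n (NeuW n) ≠ 1 := by
  rw [neuPsi_w]
  intro hEq
  have h := Equiv.ext_iff.1 hEq ((n : ℤ) + 1)
  simp only [Equiv.Perm.mul_apply, Equiv.swap_inv, Equiv.Perm.one_apply,
    Equiv.swap_apply_def] at h
  split_ifs at h <;> omega

private def NeuK (S : Set ℕ) : Subgroup (FreeGroup Bool) where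
  carrier := {w | ∀ m ∉ S, NeuPsi m w = 1}
  one_mem' := fun m _ => map_one _
  mul_mem' := by
    intro a b ha hb m hm
    rw [map_mul, ha m hm, hb m hm, one_mul]
  inv_mem' := by
    intro a ha m hm
    rw [map_inv, ha m hm, inv_one]

private instance neuK_normal (S : Set ℕ) : (NeuK S).Normal := by
  constructor
  intro w hw g m hm
  have h1 : NeuPsi m w = 1 := hw m hm
  show NeuPsi m (g * w * g⁻¹) = 1
  rw [map_mul, map_mul, h1, mul_one, map_inv, mul_inv_cancel]

private lemma neuW_mem (S : Set ℕ) (n : ℕ) : NeuW n ∈ NeuK S ↔ n ∈ S := by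
  constructor
  · intro hw
    by_contra hn
    exact neu_nontriv n (hw n hn)
  · intro hn m hm
    exact neu_triv (fun e => hm (e ▸ hn))

private lemma neuK_injective : Function.Injective NeuK := by
  intro S₁ S₂ he
  ext n
  rw [← neuW_mem S₁ n, ← neuW_mem S₂ n, he]

private lemma neu_twogen (S : Set ℕ) :
    ∃ a b : FreeGroup Bool ⧸ NeuK S, Subgroup.closure {a, b} = ⊤ := by
  refine ⟨QuotientGroup.mk' (NeuK S) (FreeGroup.of true),
    QuotientGroup.mk' (NeuK S) (FreeGroup.of false), ?_⟩
  rw [← Set.image_pair, ← MonoidHom.map_closure]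
  have h1 : Subgroup.closure ({FreeGroup.of true, FreeGroup.of false} :
      Set (FreeGroup Bool)) = ⊤ := by
    rw [eq_top_iff, ← FreeGroup.closure_range_of]
    apply Subgroup.closure_mono
    rintro _ ⟨i, rfl⟩
    cases i
    · exact Set.mem_insert_of_mem _ rfl
    · exact Set.mem_insert _ _
  rw [h1, Subgroup.map_top_of_surjective _ (QuotientGroup.mk'_surjective _)]

/-- The image of `F` in `G ⧸ N`, as a set. -/
private def NeuImg {G : Type*} [Group G] (F : Subgroup G) (N : Subgroup G)
    (hN : N.Normal) : Set (G ⧸ N) :=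
  haveI := hN
  ↑(Subgroup.map (QuotientGroup.mk' N) F)

/-- The countable data from which a kernel can be reconstructed. -/
private def NeuT (G : Type*) [Group G] (F : Subgroup G) :=
  Σ N : ↥{N : Subgroup G | N.Normal}, (Bool → ↥(NeuImg F N.1 N.2))

private def NeuTheta {G : Type*} [Group G] {F : Subgroup G} (t : NeuT G F) :
    Subgroup (FreeGroup Bool) :=
  letI : (t.1 : Subgroup G).Normal := t.1.2
  (FreeGroup.lift (fun i => ((t.2 i : G ⧸ (t.1 : Subgroup G))))).ker

/-- Let `F` be a countable subgroup of a group `G`. If every group generated by at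
most two elements embeds into the image of `F` in some quotient of `G` by a normal
subgroup, then `G` has uncountably many normal subgroups. -/
theorem uncountably_many_normal_subgroups {G : Type*} [Group G]
    (F : Subgroup G) (hF : Countable F)
    (h : ∀ (Γ : Type) [Group Γ], (∃ a b : Γ, Subgroup.closure {a, b} = ⊤) →
      ∃ N : Subgroup G, ∃ hN : N.Normal,
        haveI := hN
        ∃ φ : Γ →* G ⧸ N, Function.Injective φ ∧
          ∀ γ : Γ, φ γ ∈ F.map (QuotientGroup.mk' N)) :
    ¬ Set.Countable {N : Subgroup G | N.Normal} := by
  intro hc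
  have h' : ∀ S : Set ℕ, ∃ N : Subgroup G, ∃ hN : N.Normal,
      ∃ φ : (FreeGroup Bool ⧸ NeuK S) →* G ⧸ N, Function.Injective φ ∧
        ∀ γ, φ γ ∈ F.map (@QuotientGroup.mk' G _ N hN) := by
    intro S
    obtain ⟨N, hN, φ, h1, h2⟩ := h (FreeGroup Bool ⧸ NeuK S) (neu_twogen S)
    exact ⟨N, hN, φ, h1, h2⟩
  choose N hN φ hinj hmem using h'
  -- every kernel `NeuK S` is reconstructed from countable data
  have key : ∀ S : Set ℕ, ∃ t : NeuT G F, NeuTheta t = NeuK S := by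
    intro S
    haveI := hN S
    refine ⟨⟨⟨N S, hN S⟩, fun i =>
      ⟨φ S (QuotientGroup.mk' (NeuK S)
        (if i then FreeGroup.of true else FreeGroup.of false)), hmem S _⟩⟩, ?_⟩
    show (FreeGroup.lift (fun i : Bool => φ S (QuotientGroup.mk' (NeuK S)
        (if i then FreeGroup.of true else FreeGroup.of false)))).ker = NeuK S
    have e1 : FreeGroup.lift (fun i : Bool => φ S (QuotientGroup.mk' (NeuK S)
        (if i then FreeGroup.of true else FreeGroup.of false))) =
        (φ S).comp (QuotientGroup.mk' (NeuK S)) := by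
      apply FreeGroup.ext_hom
      intro a
      cases a <;> simp [FreeGroup.lift_apply_of]
    rw [e1]
    ext w
    simp only [MonoidHom.mem_ker, MonoidHom.comp_apply]
    constructor
    · intro hw
      have h1 : QuotientGroup.mk' (NeuK S) w = 1 := hinj S (by rw [hw, map_one])
      exact (QuotientGroup.eq_one_iff w).mp h1
    · intro hw
      rw [show QuotientGroup.mk' (NeuK S) w = 1 from (QuotientGroup.eq_one_iff w).mpr hw,
        map_one]
  choose t ht using key
  have htinj : Function.Injective t := by
    intro S₁ S₂ e
    exact neuK_injective (by rw [← ht S₁, ← ht S₂, e])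
  -- `NeuT G F` is countable
  have hFset : (↑F : Set G).Countable := Set.countable_coe_iff.mpr hF
  haveI : Countable ↥{N : Subgroup G | N.Normal} := hc.to_subtype
  haveI : ∀ NN : ↥{N : Subgroup G | N.Normal}, Countable ↥(NeuImg F NN.1 NN.2) := by
    intro NN
    haveI : (NN : Subgroup G).Normal := NN.2
    have : (NeuImg F NN.1 NN.2).Countable := by
      rw [NeuImg, Subgroup.coe_map]
      exact hFset.image _
    exact this.to_subtype
  haveI : Countable (NeuT G F) := by
    unfold NeuT
    infer_instance
  have : Countable (Set ℕ) := htinj.countable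
  obtain ⟨f, hf⟩ := (countable_iff_exists_injective (Set ℕ)).mp this
  exact Function.cantor_injective f hf
end

section
/- Let E be a set, let A be a subset of E, and let Y be a subset of E. Let G be a group of bijections of E such that every g ∈ G satisfies g(Y) = Y and such that for every g ∈ G the two sets {x ∈ Y ∩ A : g(x) ∉ A} and {x ∈ Y, x ∉ A : g(x) ∈ A} are finite. Then the map φ : G → ℤ defined by φ(g) = |{x ∈ Y ∩ A : g(x) ∉ A}| − |{x ∈ Y, x ∉ A : g(x) ∈ A}| is a group homomorphism. -/
open Set

/-- If the two differences of `X` and `Z` are contained in a finite set `F`, the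
difference of cardinalities of the differences equals the difference of the
cardinalities of `X ∩ F` and `Z ∩ F`. -/
lemma flux_key {E : Type*} (F X Z : Set E) (hF : F.Finite)
    (hXZ : X \ Z ⊆ F) (hZX : Z \ X ⊆ F) :
    ((X \ Z).ncard : ℤ) - (Z \ X).ncard = (X ∩ F).ncard - (Z ∩ F).ncard := by
  have e1 : X \ Z = (X ∩ F) \ (X ∩ Z ∩ F) := by
    ext x
    constructor
    · rintro ⟨hx, hz⟩
      exact ⟨⟨hx, hXZ ⟨hx, hz⟩⟩, fun h => hz h.1.2⟩
    · rintro ⟨⟨hx, hf⟩, h⟩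
      exact ⟨hx, fun hz => h ⟨⟨hx, hz⟩, hf⟩⟩
  have e2 : Z \ X = (Z ∩ F) \ (X ∩ Z ∩ F) := by
    ext x
    constructor
    · rintro ⟨hz, hx⟩
      exact ⟨⟨hz, hZX ⟨hz, hx⟩⟩, fun h => hx h.1.1⟩
    · rintro ⟨⟨hz, hf⟩, h⟩
      exact ⟨hz, fun hx => h ⟨⟨hx, hz⟩, hf⟩⟩
  have s1 : (X ∩ Z ∩ F : Set E) ⊆ X ∩ F := fun x hx => ⟨hx.1.1, hx.2⟩
  have s2 : (X ∩ Z ∩ F : Set E) ⊆ Z ∩ F := fun x hx => ⟨hx.1.2, hx.2⟩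
  rw [e1, e2, Set.cast_ncard_sdiff s1 (hF.inter_of_right X),
    Set.cast_ncard_sdiff s2 (hF.inter_of_right Z)]
  ring

/-- The flux of `g` with respect to the subset `A`, restricted to `Y`: the number of
points of `Y ∩ A` moved out of `A` by `g` minus the number of points of `Y \ A`
moved into `A` by `g`. -/
noncomputable def fluxMap {E : Type*} (A Y : Set E) (G : Subgroup (Equiv.Perm E))
    (g : G) : ℤ :=
  ({x | x ∈ Y ∧ x ∈ A ∧ (g : Equiv.Perm E) x ∉ A}.ncard : ℤ) -
  ({x | x ∈ Y ∧ x ∉ A ∧ (g : Equiv.Perm E) x ∈ A}.ncard : ℤ)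

/-- Let `E` be a set, `A, Y ⊆ E`, and let `G` be a group of bijections of `E`, each
preserving `Y`, such that for every `g ∈ G` the sets `{x ∈ Y ∩ A : g x ∉ A}` and
`{x ∈ Y \ A : g x ∈ A}` are finite. Then `g ↦ |{x ∈ Y ∩ A : g x ∉ A}| - |{x ∈ Y \ A : g x ∈ A}|`
is a group homomorphism `G → ℤ`. -/
theorem fluxMap_mul {E : Type*} (A Y : Set E) (G : Subgroup (Equiv.Perm E))
    (hY : ∀ g : G, (g : Equiv.Perm E) '' Y = Y)
    (hfin1 : ∀ g : G, {x | x ∈ Y ∧ x ∈ A ∧ (g : Equiv.Perm E) x ∉ A}.Finite)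
    (hfin2 : ∀ g : G, {x | x ∈ Y ∧ x ∉ A ∧ (g : Equiv.Perm E) x ∈ A}.Finite) :
    ∀ g h : G, fluxMap A Y G (g * h) = fluxMap A Y G g + fluxMap A Y G h := by
  intro g h
  set g' : Equiv.Perm E := (g : Equiv.Perm E)
  set h' : Equiv.Perm E := (h : Equiv.Perm E)
  -- h' preserves Y as a preimage
  have hYpre : ∀ k : G, (k : Equiv.Perm E) ⁻¹' Y = Y := by
    intro k
    conv_lhs => rw [← hY k]
    exact Set.preimage_image_eq Y (k : Equiv.Perm E).injective
  -- describe the three fluxes via the "chain" sets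
  have Sdef : ∀ k : G, {x | x ∈ Y ∧ x ∈ A ∧ (k : Equiv.Perm E) x ∉ A}
      = (Y ∩ A) \ (Y ∩ (k : Equiv.Perm E) ⁻¹' A) := by
    intro k; ext x
    simp only [mem_setOf_eq, mem_diff, mem_inter_iff, mem_preimage]
    tauto
  have Tdef : ∀ k : G, {x | x ∈ Y ∧ x ∉ A ∧ (k : Equiv.Perm E) x ∈ A}
      = (Y ∩ (k : Equiv.Perm E) ⁻¹' A) \ (Y ∩ A) := by
    intro k; ext x
    simp only [mem_setOf_eq, mem_diff, mem_inter_iff, mem_preimage]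
    tauto
  set B : Set E := Y ∩ A
  set C : Set E := Y ∩ h' ⁻¹' A
  set D : Set E := Y ∩ h' ⁻¹' (g' ⁻¹' A)
  have hgh : ((g * h : G) : Equiv.Perm E) = g' * h' := rfl
  have hDdef : D = Y ∩ ((g * h : G) : Equiv.Perm E) ⁻¹' A := by
    rw [hgh]; rfl
  -- middle chain sets are preimages under h' of the sets for g
  have hCD : C \ D = h' ⁻¹' ((Y ∩ A) \ (Y ∩ g' ⁻¹' A)) := by
    ext x
    simp only [mem_diff, mem_inter_iff, mem_preimage, C, D]
    constructor
    · rintro ⟨⟨hy, ha⟩, hd⟩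
      have hy' : h' x ∈ Y := by rw [← hY h]; exact ⟨x, hy, rfl⟩
      exact ⟨⟨hy', ha⟩, fun hc => hd ⟨hy, hc.2⟩⟩
    · rintro ⟨⟨hy', ha⟩, hd⟩
      have hy : x ∈ Y := by rw [← hYpre h]; exact hy'
      exact ⟨⟨hy, ha⟩, fun hc => hd ⟨hy', hc.2⟩⟩
  have hDC : D \ C = h' ⁻¹' ((Y ∩ g' ⁻¹' A) \ (Y ∩ A)) := by
    ext x
    simp only [mem_diff, mem_inter_iff, mem_preimage, C, D]
    constructor
    · rintro ⟨⟨hy, ha⟩, hd⟩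
      have hy' : h' x ∈ Y := by rw [← hY h]; exact ⟨x, hy, rfl⟩
      exact ⟨⟨hy', ha⟩, fun hc => hd ⟨hy, hc.2⟩⟩
    · rintro ⟨⟨hy', ha⟩, hd⟩
      have hy : x ∈ Y := by rw [← hYpre h]; exact hy'
      exact ⟨⟨hy, ha⟩, fun hc => hd ⟨hy', hc.2⟩⟩
  -- preimages under a bijection preserve ncard
  have ncard_pre : ∀ S : Set E, (h' ⁻¹' S).ncard = S.ncard := by
    intro S
    rw [← Equiv.image_symm_eq_preimage]
    exact Set.ncard_image_of_injective S h'.symm.injective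
  -- finiteness facts
  have fBC : (B \ C).Finite := by rw [← Sdef h]; exact hfin1 h
  have fCB : (C \ B).Finite := by rw [← Tdef h]; exact hfin2 h
  have fCD : (C \ D).Finite := by
    rw [hCD, ← Sdef g]
    exact Set.Finite.preimage h'.injective.injOn (hfin1 g)
  have fDC : (D \ C).Finite := by
    rw [hDC, ← Tdef g]
    exact Set.Finite.preimage h'.injective.injOn (hfin2 g)
  -- the big finite set
  set F : Set E := (B \ C) ∪ (C \ B) ∪ (C \ D) ∪ (D \ C)
  have hF : F.Finite := ((fBC.union fCB).union fCD).union fDC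
  have key := fun (X Z : Set E) => flux_key F X Z hF
  have kBC : ((B \ C).ncard : ℤ) - (C \ B).ncard = (B ∩ F).ncard - (C ∩ F).ncard :=
    key B C (fun x hx => by simp [F, hx]) (fun x hx => by simp [F, hx])
  have kCD : ((C \ D).ncard : ℤ) - (D \ C).ncard = (C ∩ F).ncard - (D ∩ F).ncard :=
    key C D (fun x hx => by simp [F, hx]) (fun x hx => by simp [F, hx])
  have hBD : B \ D ⊆ F := fun x hx => by
    by_cases hc : x ∈ C
    · exact Or.inl (Or.inr ⟨hc, hx.2⟩)
    · exact Or.inl (Or.inl (Or.inl ⟨hx.1, hc⟩))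
  have hDB : D \ B ⊆ F := fun x hx => by
    by_cases hc : x ∈ C
    · exact Or.inl (Or.inl (Or.inr ⟨hc, hx.2⟩))
    · exact Or.inr ⟨hx.1, hc⟩
  have kBD : ((B \ D).ncard : ℤ) - (D \ B).ncard = (B ∩ F).ncard - (D ∩ F).ncard :=
    key B D hBD hDB
  -- put it together
  have main : ((B \ D).ncard : ℤ) - (D \ B).ncard
      = (((B \ C).ncard : ℤ) - (C \ B).ncard) + (((C \ D).ncard : ℤ) - (D \ C).ncard) := by
    rw [kBD, kBC, kCD]; ring
  unfold fluxMap
  rw [Sdef (g * h), Tdef (g * h), Sdef g, Tdef g, Sdef h, Tdef h, ← hDdef]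
  rw [main, hCD, hDC, ncard_pre, ncard_pre]
  ring
end

section
/- Let G be a topological group acting continuously by isometries on a metric space X. Suppose H is a subset of G all of whose orbits in X have finite diameter, N is a subset of G contained in the topological closure of H in G, and T is a subset of G such that every element of G can be written as a product n·t with n ∈ N and t ∈ T. If all T-orbits in X have finite diameter, then all G-orbits in X have finite diameter. -/
/-- Let `G` be a topological group acting continuously by isometries on a metric
space `X`. Suppose `H ⊆ G` has all orbits of finite diameter, `N ⊆ G` is contained
in the closure of `H`, and `T ⊆ G` is such that every element of `G` is a product
`n * t` with `n ∈ N`, `t ∈ T`. If all `T`-orbits have finite diameter, then all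
`G`-orbits in `X` have finite diameter. -/
theorem all_orbits_isBounded {G X : Type*} [Group G] [TopologicalSpace G]
    [IsTopologicalGroup G] [MetricSpace X] [MulAction G X] [ContinuousSMul G X]
    (hiso : ∀ g : G, Isometry (fun y : X => g • y))
    (H N T : Set G)
    (hH : ∀ x : X, Bornology.IsBounded ((fun g : G => g • x) '' H))
    (hN : N ⊆ closure H)
    (hdec : ∀ g : G, ∃ n ∈ N, ∃ t ∈ T, g = n * t)
    (hT : ∀ x : X, Bornology.IsBounded ((fun g : G => g • x) '' T)) :
    ∀ x : X, Bornology.IsBounded (Set.range (fun g : G => g • x)) := by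
  intro x
  -- The N-orbit of x is contained in the closure of the H-orbit, hence bounded.
  have hNb : Bornology.IsBounded ((fun g : G => g • x) '' N) := by
    have hcl : (fun g : G => g • x) '' N ⊆ closure ((fun g : G => g • x) '' H) := by
      have hc : Continuous (fun g : G => g • x) := continuous_id.smul continuous_const
      calc (fun g : G => g • x) '' N ⊆ (fun g : G => g • x) '' closure H :=
            Set.image_mono hN
        _ ⊆ closure ((fun g : G => g • x) '' H) := image_closure_subset_closure_image hc
    exact ((hH x).closure).subset hcl
  obtain ⟨rN, hrN⟩ := hNb.subset_closedBall x
  obtain ⟨rT, hrT⟩ := (hT x).subset_closedBall x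
  apply Bornology.IsBounded.subset (Metric.isBounded_closedBall (x := x) (r := rN + rT))
  rintro _ ⟨g, rfl⟩
  obtain ⟨n, hn, t, ht, rfl⟩ := hdec g
  have h1 : dist (n • t • x) (n • x) = dist (t • x) x := (hiso n).dist_eq _ _
  have h2 : dist (n • x) x ≤ rN := hrN ⟨n, hn, rfl⟩
  have h3 : dist (t • x) x ≤ rT := hrT ⟨t, ht, rfl⟩
  simp only [Metric.mem_closedBall, mul_smul]
  calc dist (n • t • x) x ≤ dist (n • t • x) (n • x) + dist (n • x) x := dist_triangle _ _ _
    _ ≤ rT + rN := by rw [h1]; exact add_le_add h3 h2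
    _ = rN + rT := add_comm _ _
end
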